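/- Let x : V × {1,…,ℓ} → {0,1} satisfy Σ_{v∈V} x(v,s) = 1 for all s, and the aggregated connectivity inequalities Σ_{v∈V\V(v0)} x(v,s) ≤ Σ_{v∈V\V(v0)} x(v,s+1) for all v0 ∈ V and 1 ≤ s < ℓ. Then x satisfies the pairwise inequalities x(v0,s) + x(v,s0) ≤ 1 for all v0 ∈ V, v ∈ V(v0), and 1 ≤ s < s0 ≤ ℓ. -/
import Mathlib


/-- If a binary assignment `x` satisfies the assignment constraints and the aggregated
connectivity inequalities `Σ_{v∈V∖V(v0)} x(v,s) ≤ Σ_{v∈V∖V(v0)} x(v,s+1)`, then it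
satisfies the pairwise inequalities `x(v0,s) + x(v,s0) ≤ 1` for all `v ∈ V(v0)` and
`1 ≤ s < s0 ≤ ℓ`. -/
theorem aggregated_implies_pairwise {I : Type*} [DecidableEq I] (L : I → I → Prop)
    [DecidableRel (Relation.ReflTransGen L)] (V : Finset I) (ℓ : ℕ) (x : I → ℕ → ℤ)
    (hbin : ∀ v ∈ V, ∀ s, x v s = 0 ∨ x v s = 1)
    (hassign : ∀ s, 1 ≤ s → s ≤ ℓ → ∑ v ∈ V, x v s = 1)
    (hagg : ∀ v0 ∈ V, ∀ s, 1 ≤ s → s < ℓ →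
      ∑ v ∈ V.filter (fun v => v = v0 ∨ Relation.ReflTransGen L v0 v), x v s
        ≤ ∑ v ∈ V.filter (fun v => v = v0 ∨ Relation.ReflTransGen L v0 v), x v (s + 1)) :
    ∀ v0 ∈ V, ∀ v ∈ V, v ≠ v0 → ¬ Relation.ReflTransGen L v0 v →
      ∀ s s0, 1 ≤ s → s < s0 → s0 ≤ ℓ → x v0 s + x v s0 ≤ 1 := by
  intro v0 hv0 v hv hne hnr s s0 hs1 hss0 hs0ℓ
  set S := V.filter (fun v => v = v0 ∨ Relation.ReflTransGen L v0 v) with hS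
  set f : ℕ → ℤ := fun s => ∑ u ∈ S, x u s with hf
  have hnonneg : ∀ u ∈ V, ∀ t, 0 ≤ x u t := by
    intro u hu t
    rcases hbin u hu t with h | h <;> simp [h]
  -- monotonicity of f
  have hmono : ∀ t, s ≤ t → t ≤ ℓ → f s ≤ f t := by
    intro t
    induction t with
    | zero => intro h1 h2; omega
    | succ n ih =>
      intro h1 h2
      rcases Nat.eq_or_lt_of_le h1 with h | h
      · rw [h]
      · have hn : s ≤ n := Nat.lt_succ_iff.mp h
        have h1n : 1 ≤ n := le_trans hs1 hn
        have := hagg v0 hv0 n h1n (by omega)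
        exact le_trans (ih hn (by omega)) this
  have hv0S : v0 ∈ S := Finset.mem_filter.mpr ⟨hv0, Or.inl rfl⟩
  have hvS : v ∉ S := by
    intro h
    rcases Finset.mem_filter.mp h with ⟨_, h | h⟩
    · exact hne h
    · exact hnr h
  -- f s0 bounded via total sum
  have hsub : S ⊆ V := Finset.filter_subset _ _
  have hins : insert v S ⊆ V := by
    intro u hu
    rcases Finset.mem_insert.mp hu with h | h
    · exact h ▸ hv
    · exact hsub h
  have hsum : x v s0 + f s0 ≤ 1 := by
    have h1 : ∑ u ∈ insert v S, x u s0 ≤ ∑ u ∈ V, x u s0 :=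
      Finset.sum_le_sum_of_subset_of_nonneg hins (fun u hu _ => hnonneg u hu s0)
    rw [Finset.sum_insert hvS] at h1
    rw [hassign s0 (by omega) hs0ℓ] at h1
    exact h1
  have hxv0 : x v0 s ≤ f s :=
    Finset.single_le_sum (fun u hu => hnonneg u (hsub hu) s) hv0S
  rcases hbin v0 hv0 s with h0 | h0
  · have : x v s0 ≤ 1 := by
      rcases hbin v hv s0 with h | h <;> simp [h]
    omega
  · have h1 : (1 : ℤ) ≤ f s := h0 ▸ hxv0
    have h2 : f s ≤ f s0 := hmono s0 (le_of_lt hss0) hs0ℓ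
    omega
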